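/- Let k ≥ 1 and 0 ≤ j ≤ k−1. Then D·G_{2^k−2^j} = N(k,j) in F₂[x_1,…,x_k]; that is, the quotient polynomial p_{k,j} = N(k,j)/D equals the sum of all monomials of degree 2^k−2^j in x_1,…,x_k in which all nonzero exponents are powers of 2. -/

import Mathlib

open MvPolynomial

/-- `Vdm k t` is the determinant of the `k × k` matrix whose `(i, j)` entry is `xᵢ ^ t j`,
in `F₂[x₁, …, x_k]`. -/
noncomputable def Vdm (k : ℕ) (t : Fin k → ℕ) : MvPolynomial (Fin k) (ZMod 2) :=
  Matrix.det (Matrix.of fun i j : Fin k => (X i : MvPolynomial (Fin k) (ZMod 2)) ^ t j)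

/-- `D k = V(2^0, 2^1, …, 2^(k-1))`. -/
noncomputable def D (k : ℕ) : MvPolynomial (Fin k) (ZMod 2) :=
  Vdm k fun j => 2 ^ (j : ℕ)

/-- `N k ℓ j` is the Vandermonde determinant whose exponent tuple lists the 2-powers
`2^0, …, 2^(k-1)` with `2^j` omitted, followed by `2^ℓ`. -/
noncomputable def N (k ℓ j : ℕ) : MvPolynomial (Fin k) (ZMod 2) :=
  Vdm k fun i =>
    if (i : ℕ) + 1 < k then (if (i : ℕ) < j then 2 ^ (i : ℕ) else 2 ^ ((i : ℕ) + 1))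
    else 2 ^ ℓ

/- `G k m` is the sum of all monomials of total degree `m` in `x₁, …, x_k` in which
every nonzero exponent is a power of 2. -/
open Classical in
noncomputable def G (k m : ℕ) : MvPolynomial (Fin k) (ZMod 2) :=
  ∑ d : Fin k → Fin (m + 1),
    if (∑ i, (d i : ℕ)) = m ∧ ∀ i, (d i : ℕ) ≠ 0 → ∃ e, (d i : ℕ) = 2 ^ e then
      ∏ i, (X i : MvPolynomial (Fin k) (ZMod 2)) ^ (d i : ℕ)
    else 0

lemma pow2_inj {a b : ℕ} (h : 2^a = 2^b) : a = b :=
  Nat.pow_right_injective (le_refl 2) h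

lemma L1 : ∀ a b c : ℕ, 2^a + 2^b = 2^c → a = b := by
  intro a
  induction a with
  | zero =>
    intro b c h
    cases b with
    | zero => rfl
    | succ b =>
      exfalso
      cases c with
      | zero => have := Nat.pow_pos (n := b+1) (show 0 < 2 by norm_num); omega
      | succ c =>
        have h1 : 2^(b+1) = 2 * 2^b := by ring
        have h2 : 2^(c+1) = 2 * 2^c := by ring
        omega
  | succ a ih =>
    intro b c h
    cases b with
    | zero =>
      exfalso
      cases c with
      | zero => have := Nat.pow_pos (n := a+1) (show 0 < 2 by norm_num); omega
      | succ c =>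
        have h1 : 2^(a+1) = 2 * 2^a := by ring
        have h2 : 2^(c+1) = 2 * 2^c := by ring
        omega
    | succ b =>
      cases c with
      | zero =>
        have := Nat.pow_pos (n := a+1) (show 0 < 2 by norm_num)
        have := Nat.pow_pos (n := b+1) (show 0 < 2 by norm_num)
        omega
      | succ c =>
        have h1 : 2^(a+1) = 2 * 2^a := by ring
        have h2 : 2^(b+1) = 2 * 2^b := by ring
        have h3 : 2^(c+1) = 2 * 2^c := by ring
        have : 2^a + 2^b = 2^c := by omega
        have := ih b c this
        omega

lemma L2 : ∀ a b c d : ℕ, 2^a + 2^b = 2^c + 2^d → (a = c ∧ b = d) ∨ (a = d ∧ b = c) := by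
  intro a
  induction a with
  | zero =>
    intro b c d h
    cases b with
    | zero =>
      -- 2 = 2^c + 2^d, powers ≥ 1, so c = d = 0
      have hc := Nat.one_le_two_pow (n := c)
      have hd := Nat.one_le_two_pow (n := d)
      have hc0 : c = 0 := by
        by_contra hc0
        have : 2 ≤ 2^c := by
          calc 2 = 2^1 := rfl
          _ ≤ 2^c := Nat.pow_le_pow_right (by norm_num) (by omega)
        omega
      have hd0 : d = 0 := by
        by_contra hd0
        have : 2 ≤ 2^d := by
          calc 2 = 2^1 := rfl
          _ ≤ 2^d := Nat.pow_le_pow_right (by norm_num) (by omega)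
        omega
      left; omega
    | succ b =>
      -- LHS odd, so exactly one of c,d is 0
      have hb : 2^(b+1) = 2 * 2^b := by ring
      cases c with
      | zero =>
        cases d with
        | zero => have := Nat.one_le_two_pow (n := b); omega
        | succ d =>
          have hd : 2^(d+1) = 2 * 2^d := by ring
          have : 2^(b+1) = 2^(d+1) := by omega
          left; exact ⟨rfl, pow2_inj this⟩
      | succ c =>
        have hc : 2^(c+1) = 2 * 2^c := by ring
        cases d with
        | zero =>
          have : 2^(b+1) = 2^(c+1) := by omega
          right; exact ⟨rfl, pow2_inj this⟩
        | succ d =>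
          have hd : 2^(d+1) = 2 * 2^d := by ring
          omega
  | succ a ih =>
    intro b c d h
    have ha : 2^(a+1) = 2 * 2^a := by ring
    cases b with
    | zero =>
      cases c with
      | zero =>
        cases d with
        | zero => have := Nat.one_le_two_pow (n := a); omega
        | succ d =>
          have hd : 2^(d+1) = 2 * 2^d := by ring
          have : 2^(a+1) = 2^(d+1) := by omega
          right; exact ⟨pow2_inj this, rfl⟩
      | succ c =>
        have hc : 2^(c+1) = 2 * 2^c := by ring
        cases d with
        | zero =>
          have : 2^(a+1) = 2^(c+1) := by omega
          left; exact ⟨pow2_inj this, rfl⟩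
        | succ d =>
          have hd : 2^(d+1) = 2 * 2^d := by ring
          omega
    | succ b =>
      have hb : 2^(b+1) = 2 * 2^b := by ring
      cases c with
      | zero =>
        cases d with
        | zero =>
          have := Nat.one_le_two_pow (n := a)
          have := Nat.one_le_two_pow (n := b)
          omega
        | succ d =>
          have hd : 2^(d+1) = 2 * 2^d := by ring
          omega
      | succ c =>
        have hc : 2^(c+1) = 2 * 2^c := by ring
        cases d with
        | zero => omega
        | succ d =>
          have hd : 2^(d+1) = 2 * 2^d := by ring
          have h' : 2^a + 2^b = 2^c + 2^d := by omega
          rcases ih b c d h' with ⟨h1, h2⟩ | ⟨h1, h2⟩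
          · left; omega
          · right; omega

def wt (n : ℕ) : ℕ := (Nat.digits 2 n).sum

lemma wt_zero : wt 0 = 0 := by simp [wt]

lemma wt_rec (n : ℕ) (hn : 0 < n) : wt n = n % 2 + wt (n / 2) := by
  unfold wt
  rw [Nat.digits_def' (by norm_num : 1 < 2) hn]
  simp

lemma wt_one : wt 1 = 1 := by simp [wt]

lemma wt_subadd : ∀ n a b : ℕ, a + b = n → wt (a + b) ≤ wt a + wt b := by
  intro n
  induction n using Nat.strong_induction_on with
  | _ n ih =>
    intro a b hab
    rcases Nat.eq_zero_or_pos a with ha | ha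
    · simp [ha]
    rcases Nat.eq_zero_or_pos b with hb | hb
    · simp [hb]
    rcases Nat.mod_two_eq_zero_or_one a with hae | hao
    · have h1 : (a + b) / 2 = a / 2 + b / 2 := by omega
      rw [wt_rec (a+b) (by omega), h1, wt_rec a ha, wt_rec b hb]
      have := ih (a/2 + b/2) (by omega) (a/2) (b/2) rfl
      omega
    · rcases Nat.mod_two_eq_zero_or_one b with hbe | hbo
      · have h1 : (a + b) / 2 = a / 2 + b / 2 := by omega
        rw [wt_rec (a+b) (by omega), h1, wt_rec a ha, wt_rec b hb]
        have := ih (a/2 + b/2) (by omega) (a/2) (b/2) rfl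
        omega
      · have h1 : (a + b) / 2 = a / 2 + (b / 2 + 1) := by omega
        rw [wt_rec (a+b) (by omega), h1, wt_rec a ha, wt_rec b hb]
        have h3 := ih (a/2 + (b/2+1)) (by omega) (a/2) (b/2+1) rfl
        have h4 := ih (b/2 + 1) (by omega) (b/2) 1 rfl
        rw [wt_one] at h4
        omega

lemma wt_add_le (a b : ℕ) : wt (a + b) ≤ wt a + wt b := wt_subadd (a+b) a b rfl

lemma wt_two_pow (e : ℕ) : wt (2^e) = 1 := by
  induction e with
  | zero => simpa using wt_one
  | succ e ih =>
    have h1 : 2^(e+1) = 2 * 2^e := by ring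
    have hp : 0 < 2^e := Nat.pow_pos (by norm_num)
    rw [wt_rec _ (by omega)]
    have h2 : 2^(e+1) % 2 = 0 := by omega
    have h3 : 2^(e+1) / 2 = 2^e := by omega
    rw [h2, h3, ih]

lemma wt_pred_two_pow (k : ℕ) : wt (2^k - 1) = k := by
  induction k with
  | zero => simpa using wt_zero
  | succ k ih =>
    have h1 : 2^(k+1) = 2 * 2^k := by ring
    have hp : 0 < 2^k := Nat.pow_pos (by norm_num)
    rw [wt_rec _ (by omega)]
    have h2 : (2^(k+1) - 1) % 2 = 1 := by omega
    have h3 : (2^(k+1) - 1) / 2 = 2^k - 1 := by omega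
    rw [h2, h3, ih]
    omega

lemma prod_X_pow (k : ℕ) (c : Fin k → ℕ) :
    (∏ i, (X i : MvPolynomial (Fin k) (ZMod 2)) ^ c i)
      = monomial (Finsupp.equivFunOnFinite.symm c) 1 := by
  rw [← prod_X_pow_eq_monomial]
  refine (Finset.prod_subset (Finset.subset_univ _) ?_).symm
  intro i _ hi
  have : (Finsupp.equivFunOnFinite.symm c) i = 0 := by
    simpa [Finsupp.mem_support_iff] using hi
  simp only [Finsupp.coe_equivFunOnFinite_symm] at this ⊢
  simp [this]

open Classical in
lemma coeff_G (k m : ℕ) (ν : Fin k →₀ ℕ) :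
    coeff ν (G k m)
      = if (∑ l, ν l) = m ∧ ∀ l, ν l ≠ 0 → ∃ e, ν l = 2 ^ e then 1 else 0 := by
  classical
  unfold G
  rw [coeff_sum]
  by_cases hν : (∑ l, ν l) = m ∧ ∀ l, ν l ≠ 0 → ∃ e, ν l = 2 ^ e
  · rw [if_pos hν]
    have hbound : ∀ l, ν l < m + 1 := by
      intro l
      have : ν l ≤ ∑ l', ν l' := Finset.single_le_sum (f := fun l' => ν l') (by intros; positivity) (Finset.mem_univ l)
      omega
    set d₀ : Fin k → Fin (m+1) := fun l => ⟨ν l, hbound l⟩ with hd₀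
    rw [Finset.sum_eq_single d₀]
    · have hcond : (∑ i, ((d₀ i : ℕ))) = m ∧ ∀ i, (d₀ i : ℕ) ≠ 0 → ∃ e, (d₀ i : ℕ) = 2 ^ e := by
        simpa [hd₀] using hν
      rw [if_pos hcond, prod_X_pow, coeff_monomial, if_pos]
      ext l
      simp [hd₀]
    · intro d _ hd
      split_ifs with hc
      · rw [prod_X_pow, coeff_monomial]
        rw [if_neg]
        intro he
        apply hd
        funext l
        have : (d l : ℕ) = ν l := by
          have := congrArg (fun f => f l) he
          simpa using this
        simp [hd₀, Fin.ext_iff, this]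
      · simp
    · intro h
      exact absurd (Finset.mem_univ d₀) h
  · rw [if_neg hν]
    apply Finset.sum_eq_zero
    intro d _
    split_ifs with hc
    · rw [prod_X_pow, coeff_monomial]
      rw [if_neg]
      intro he
      apply hν
      constructor
      · rw [← hc.1]
        apply Finset.sum_congr rfl
        intro l _
        have := congrArg (fun f => f l) he
        simpa using this.symm
      · intro l hl
        have hdl : (d l : ℕ) = ν l := by
          have := congrArg (fun f => f l) he
          simpa using this
        rw [← hdl]
        exact hc.2 l (by rw [hdl]; exact hl)
    · simp

open Classical in
lemma count_even (k n : ℕ) (hn1 : n ≠ 1) (hnk : n ≤ 2^k) :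
    ∑ j ∈ Finset.range (k+1),
      (if 2^j ≤ n ∧ (n - 2^j = 0 ∨ ∃ e, n - 2^j = 2^e) then (1 : ZMod 2) else 0) = 0 := by
  rcases Nat.eq_zero_or_pos n with hn0 | hn0
  · apply Finset.sum_eq_zero
    intro j _
    rw [if_neg]
    rintro ⟨hle, -⟩
    have := Nat.one_le_two_pow (n := j)
    omega
  have hn2 : 2 ≤ n := by omega
  have key : ∀ u v : ℕ, u ≠ v → u ≤ k → v ≤ k →
      (∀ j, (2^j ≤ n ∧ (n - 2^j = 0 ∨ ∃ e, n - 2^j = 2^e)) ↔ (j = u ∨ j = v)) →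
      ∑ j ∈ Finset.range (k+1),
        (if 2^j ≤ n ∧ (n - 2^j = 0 ∨ ∃ e, n - 2^j = 2^e) then (1 : ZMod 2) else 0) = 0 := by
    intro u v huv hu hv hiff
    have : ∀ j ∈ Finset.range (k+1),
        (if 2^j ≤ n ∧ (n - 2^j = 0 ∨ ∃ e, n - 2^j = 2^e) then (1 : ZMod 2) else 0)
          = (if j = u then (1:ZMod 2) else 0) + (if j = v then (1:ZMod 2) else 0) := by
      intro j _
      by_cases h : 2^j ≤ n ∧ (n - 2^j = 0 ∨ ∃ e, n - 2^j = 2^e)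
      · rw [if_pos h]
        rcases (hiff j).mp h with rfl | rfl
        · rw [if_pos rfl, if_neg huv]; norm_num
        · rw [if_neg (Ne.symm huv), if_pos rfl]; norm_num
      · rw [if_neg h, if_neg, if_neg]
        · norm_num
        · intro hj; exact h ((hiff j).mpr (Or.inr hj))
        · intro hj; exact h ((hiff j).mpr (Or.inl hj))
    rw [Finset.sum_congr rfl this, Finset.sum_add_distrib]
    rw [Finset.sum_ite_eq' (Finset.range (k+1)) u (fun _ => (1:ZMod 2)),
        Finset.sum_ite_eq' (Finset.range (k+1)) v (fun _ => (1:ZMod 2))]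
    rw [if_pos (by simp; omega), if_pos (by simp; omega)]
    decide
  by_cases hpow : ∃ a, n = 2^a
  · obtain ⟨a, rfl⟩ := hpow
    have ha1 : 1 ≤ a := by
      by_contra h
      interval_cases a <;> omega
    have hak : a ≤ k := by
      exact (Nat.pow_le_pow_iff_right (by norm_num)).mp hnk
    apply key (a-1) a (by omega) (by omega) hak
    intro j
    constructor
    · rintro ⟨hle, h0 | ⟨e, he⟩⟩
      · right
        exact pow2_inj (by omega)
      · have : 2^j + 2^e = 2^a := by omega
        have hje := L1 j e _ this
        subst hje
        have : 2^(j+1) = 2^a := by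
          have : 2^(j+1) = 2 * 2^j := by ring
          omega
        left
        have := pow2_inj this
        omega
    · rintro (rfl | rfl)
      · have h2 : 2^a = 2 * 2^(a-1) := by
          conv_lhs => rw [show a = (a-1)+1 by omega]
          rw [pow_succ]; ring
        constructor
        · omega
        · right; exact ⟨a-1, by omega⟩
      · exact ⟨le_refl _, Or.inl (by omega)⟩
  · by_cases htwo : ∃ a b, a < b ∧ n = 2^a + 2^b
    · obtain ⟨a, b, hab, rfl⟩ := htwo
      have hpa := Nat.one_le_two_pow (n := a)
      have hpb := Nat.one_le_two_pow (n := b)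
      have hbk : b ≤ k := by
        have : 2^b ≤ 2^k := by omega
        exact (Nat.pow_le_pow_iff_right (by norm_num)).mp this
      apply key a b (by omega) (by omega) hbk
      intro j
      constructor
      · rintro ⟨hle, h0 | ⟨e, he⟩⟩
        · exfalso
          have : 2^a + 2^b = 2^j := by omega
          have := L1 a b _ this
          omega
        · have : 2^a + 2^b = 2^j + 2^e := by omega
          rcases L2 a b j e this with ⟨h1, h2⟩ | ⟨h1, h2⟩
          · left; omega
          · right; omega
      · rintro (rfl | rfl)
        · exact ⟨by omega, Or.inr ⟨b, by omega⟩⟩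
        · exact ⟨by omega, Or.inr ⟨a, by omega⟩⟩
    · apply Finset.sum_eq_zero
      intro j _
      rw [if_neg]
      rintro ⟨hle, h0 | ⟨e, he⟩⟩
      · exact hpow ⟨j, by omega⟩
      · have hn : n = 2^j + 2^e := by omega
        rcases Nat.lt_trichotomy j e with h | h | h
        · exact htwo ⟨j, e, h, hn⟩
        · subst h
          apply hpow
          refine ⟨j+1, ?_⟩
          have : 2^(j+1) = 2 * 2^j := by ring
          omega
        · exact htwo ⟨e, j, h, by omega⟩

lemma wt_sum_le {s : Finset (Fin k)} (f : Fin k → ℕ) :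
    wt (∑ l ∈ s, f l) ≤ ∑ l ∈ s, wt (f l) := by
  classical
  induction s using Finset.cons_induction with
  | empty => simp [wt_zero]
  | cons a s ha ih =>
    rw [Finset.sum_cons, Finset.sum_cons]
    exact le_trans (wt_add_le _ _) (by omega)

lemma G_zero (k : ℕ) : G k 0 = 1 := by
  classical
  unfold G
  have h1 : ∀ d : Fin k → Fin 1,
      ((∑ i, (d i : ℕ)) = 0 ∧ ∀ i, (d i : ℕ) ≠ 0 → ∃ e, (d i : ℕ) = 2 ^ e) := by
    intro d
    constructor
    · simp [Fin.val_eq_zero]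
    · intro i hi; simp [Fin.val_eq_zero] at hi
  calc (∑ d : Fin k → Fin 1, if (∑ i, (d i : ℕ)) = 0 ∧ ∀ i, (d i : ℕ) ≠ 0 → ∃ e, (d i : ℕ) = 2 ^ e
          then ∏ i, (X i : MvPolynomial (Fin k) (ZMod 2)) ^ (d i : ℕ) else 0)
      = ∑ d : Fin k → Fin 1, 1 := by
        apply Finset.sum_congr rfl
        intro d _
        rw [if_pos (h1 d)]
        apply Finset.prod_eq_one
        intro i _
        simp [Fin.val_eq_zero]
    _ = 1 := by
        rw [Finset.sum_const]
        simp
  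
lemma star (k : ℕ) (i : Fin k) :
    (X i : MvPolynomial (Fin k) (ZMod 2)) ^ (2^k)
      = ∑ j ∈ Finset.range k, G k (2^k - 2^j) * (X i) ^ (2^j) := by
  classical
  have hk : 0 < k := i.pos
  have main : ∑ j ∈ Finset.range (k+1), G k (2^k - 2^j) * (X i : MvPolynomial (Fin k) (ZMod 2)) ^ (2^j) = 0 := by
    apply MvPolynomial.ext
    intro μ
    rw [coeff_sum, coeff_zero]
    -- rewrite each summand's coefficient
    set A := ∑ l ∈ Finset.univ.erase i, μ l with hA
    have hsum : ∑ l, μ l = μ i + A := (Finset.add_sum_erase _ _ (Finset.mem_univ i)).symm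
    have hterm : ∀ j, coeff μ (G k (2^k - 2^j) * (X i : MvPolynomial (Fin k) (ZMod 2)) ^ (2^j))
        = if (fun₀ | i => 2^j) ≤ μ then
            (if ((μ i - 2^j) + A = 2^k - 2^j ∧
                 ∀ l, (if l = i then μ i - 2^j else μ l) ≠ 0 → ∃ e, (if l = i then μ i - 2^j else μ l) = 2 ^ e)
              then (1:ZMod 2) else 0)
          else 0 := by
      intro j
      rw [X_pow_eq_monomial, coeff_mul_monomial']
      by_cases hle : (fun₀ | i => 2^j) ≤ μ
      · rw [if_pos hle, if_pos hle, mul_one, coeff_G]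
        have happ : ∀ l, (μ - fun₀ | i => 2^j) l = if l = i then μ i - 2^j else μ l := by
          intro l
          rw [Finsupp.tsub_apply, Finsupp.single_apply]
          split_ifs with h1 h2 h2
          · subst h2; rfl
          · exact absurd h1.symm h2
          · exact absurd h2.symm h1
          · simp
        have hs : (∑ l, (μ - fun₀ | i => 2^j) l) = (μ i - 2^j) + A := by
          rw [← Finset.add_sum_erase _ _ (Finset.mem_univ i), happ, if_pos rfl]
          congr 1
          apply Finset.sum_congr rfl
          intro l hl
          rw [happ, if_neg (Finset.ne_of_mem_erase hl)]
        apply if_congr _ rfl rfl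
        rw [hs]
        constructor
        · rintro ⟨h1, h2⟩
          refine ⟨h1, fun l => ?_⟩
          rw [← happ l]; exact h2 l
        · rintro ⟨h1, h2⟩
          refine ⟨h1, fun l => ?_⟩
          rw [happ l]; exact h2 l
      · rw [if_neg hle, if_neg hle]
    rw [Finset.sum_congr rfl (fun j _ => hterm j)]
    -- global case analysis
    by_cases hrest : ∀ l, l ≠ i → (μ l = 0 ∨ ∃ e, μ l = 2^e)
    · by_cases hglob : μ i + A = 2^k
      · by_cases hone : μ i = 1
        · exfalso
          have hA1 : A = 2^k - 1 := by
            have h2 := Nat.one_le_two_pow (n := k)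
            omega
          have h1 : wt A ≤ ∑ l ∈ Finset.univ.erase i, wt (μ l) := wt_sum_le _
          have h2 : ∑ l ∈ Finset.univ.erase i, wt (μ l) ≤ (Finset.univ.erase i).card := by
            have h4 : ∀ l ∈ Finset.univ.erase i, wt (μ l) ≤ 1 := by
              intro l hl
              rcases hrest l (Finset.ne_of_mem_erase hl) with h | ⟨e, he⟩
              · simp [h, wt_zero]
              · simp [he, wt_two_pow]
            have := Finset.sum_le_card_nsmul (Finset.univ.erase i) (fun l => wt (μ l)) 1 h4
            simpa using this
          have h3 : (Finset.univ.erase i).card = k - 1 := by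
            rw [Finset.card_erase_of_mem (Finset.mem_univ i)]
            simp
          rw [hA1, wt_pred_two_pow] at h1
          omega
        · -- use count_even with n = μ i
          have hle2 : μ i ≤ 2^k := by omega
          refine Eq.trans (Finset.sum_congr rfl ?_) (count_even k (μ i) hone hle2)
          intro j hj
          have hjk : j ≤ k := by simp at hj; omega
          have hpj : (2:ℕ)^j ≤ 2^k := Nat.pow_le_pow_right (by norm_num) hjk
          by_cases hle : (fun₀ | i => 2^j) ≤ μ
          · have hle' : 2^j ≤ μ i := Finsupp.single_le_iff.mp hle
            rw [if_pos hle]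
            have hcond : ((μ i - 2^j) + A = 2^k - 2^j ∧
                 ∀ l, (if l = i then μ i - 2^j else μ l) ≠ 0 → ∃ e, (if l = i then μ i - 2^j else μ l) = 2 ^ e)
              ↔ (2^j ≤ μ i ∧ (μ i - 2^j = 0 ∨ ∃ e, μ i - 2^j = 2^e)) := by
              constructor
              · rintro ⟨h1, h2⟩
                refine ⟨hle', ?_⟩
                by_cases h0 : μ i - 2^j = 0
                · exact Or.inl h0
                · right
                  have := h2 i
                  rw [if_pos rfl] at this
                  exact this h0
              · rintro ⟨-, h⟩
                refine ⟨by omega, fun l => ?_⟩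
                split_ifs with hli
                · intro hne
                  rcases h with h | h
                  · exact absurd h hne
                  · exact h
                · intro hne
                  rcases hrest l hli with h' | h'
                  · exact absurd h' hne
                  · exact h'
            exact if_congr hcond rfl rfl
          · rw [if_neg hle, if_neg]
            rintro ⟨h1, -⟩
            exact hle (Finsupp.single_le_iff.mpr h1)
      · -- degree mismatch: all terms zero
        apply Finset.sum_eq_zero
        intro j hj
        have hjk : j ≤ k := by simp at hj; omega
        have hpj : (2:ℕ)^j ≤ 2^k := Nat.pow_le_pow_right (by norm_num) hjk
        by_cases hle : (fun₀ | i => 2^j) ≤ μ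
        · have hle' : 2^j ≤ μ i := Finsupp.single_le_iff.mp hle
          rw [if_pos hle, if_neg]
          rintro ⟨h1, -⟩
          exact hglob (by omega)
        · rw [if_neg hle]
    · -- some other coordinate invalid
      apply Finset.sum_eq_zero
      intro j _
      push_neg at hrest
      obtain ⟨l, hli, hl0, hlp⟩ := hrest
      by_cases hle : (fun₀ | i => 2^j) ≤ μ
      · rw [if_pos hle, if_neg]
        rintro ⟨-, h2⟩
        have := h2 l
        rw [if_neg hli] at this
        obtain ⟨e, he⟩ := this hl0
        exact hlp e he
      · rw [if_neg hle]
  -- extract the top term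
  rw [Finset.sum_range_succ] at main
  have h0 : (2:ℕ)^k - 2^k = 0 := by omega
  rw [h0, G_zero, one_mul] at main
  have := CharTwo.add_eq_iff_eq_add.mp main
  rw [zero_add] at this
  exact this.symm

theorem stmt8 (k j : ℕ) (hk : 1 ≤ k) (hj : j ≤ k - 1) :
    D k * G k (2 ^ k - 2 ^ j) = N k k j := by
  classical
  have hjk : j < k := by omega
  -- the value function of the column permutation
  set fv : ℕ → ℕ := fun c => if c + 1 < k then (if c < j then c else c + 1) else j with hfv
  have hfvlt : ∀ c : Fin k, fv c < k := by
    intro c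
    have := c.isLt
    simp only [hfv]
    split_ifs <;> omega
  set f : Fin k → Fin k := fun c => ⟨fv c, hfvlt c⟩ with hf
  have hinj : Function.Injective f := by
    intro a b hab
    have h : fv a = fv b := congrArg Fin.val hab
    have ha := a.isLt
    have hb := b.isLt
    simp only [hfv] at h
    apply Fin.ext
    split_ifs at h <;> omega
  let σ : Equiv.Perm (Fin k) := Equiv.ofBijective f ((Finite.injective_iff_bijective).mp hinj)
  have hσ : ∀ c, σ c = f c := fun c => rfl
  set last : Fin k := ⟨k - 1, by omega⟩ with hlast
  set Dmat : Matrix (Fin k) (Fin k) (MvPolynomial (Fin k) (ZMod 2)) :=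
    Matrix.of fun i c : Fin k => (X i : MvPolynomial (Fin k) (ZMod 2)) ^ (2 ^ (c : ℕ)) with hDmat
  set A : Matrix (Fin k) (Fin k) (MvPolynomial (Fin k) (ZMod 2)) := Dmat.submatrix id σ with hAmat
  have hAapp : ∀ i c, A i c = (X i : MvPolynomial (Fin k) (ZMod 2)) ^ (2 ^ (fv c)) := by
    intro i c
    simp [hAmat, hDmat, Matrix.submatrix_apply, hσ c, hf]
  -- N is A with last column updated
  have hN : N k k j = (A.updateCol last
      (fun i => (X i : MvPolynomial (Fin k) (ZMod 2)) ^ (2 ^ k))).det := by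
    unfold N Vdm
    apply congrArg Matrix.det
    apply Matrix.ext
    intro i c
    rw [Matrix.updateCol_apply, Matrix.of_apply]
    show (X i : MvPolynomial (Fin k) (ZMod 2)) ^
        (if (c : ℕ) + 1 < k then (if (c : ℕ) < j then 2 ^ (c : ℕ) else 2 ^ ((c : ℕ) + 1)) else 2 ^ k)
      = _
    by_cases hc : c = last
    · subst hc
      rw [if_pos rfl, if_neg (show ¬((k - 1) + 1 < k) by omega)]
    · rw [if_neg hc]
      have hcv : (c : ℕ) + 1 < k := by
        have h1 := c.isLt
        have h2 : (c : ℕ) ≠ k - 1 := fun h => hc (Fin.ext (show (c:ℕ) = k - 1 from h))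
        omega
      rw [if_pos hcv, hAapp]
      have hfvc : fv (c : ℕ) = if (c : ℕ) < j then (c : ℕ) else (c : ℕ) + 1 := by
        simp only [hfv]
        rw [if_pos hcv]
      rw [hfvc]
      split_ifs <;> rfl
  -- the coefficients
  set coeffs : Fin k → MvPolynomial (Fin k) (ZMod 2) :=
    fun c => G k (2 ^ k - 2 ^ (fv c)) with hcoeffs
  have hcol : (fun i => (X i : MvPolynomial (Fin k) (ZMod 2)) ^ (2 ^ k))
      = fun i => ∑ c : Fin k, coeffs c • A i c := by
    funext i
    rw [star k i]
    have h2 := Fintype.sum_equiv σ (fun c => coeffs c • A i c)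
      (fun j' : Fin k => G k (2 ^ k - 2 ^ (j' : ℕ)) * (X i : MvPolynomial (Fin k) (ZMod 2)) ^ (2 ^ (j' : ℕ)))
      (by
        intro x
        show coeffs x • A i x = G k (2 ^ k - 2 ^ ((σ x : Fin k) : ℕ)) * (X i : MvPolynomial (Fin k) (ZMod 2)) ^ (2 ^ ((σ x : Fin k) : ℕ))
        rw [hAapp, smul_eq_mul]
        rfl)
    rw [h2]
    rw [Fin.sum_univ_eq_sum_range (fun j' => G k (2 ^ k - 2 ^ j') * (X i : MvPolynomial (Fin k) (ZMod 2)) ^ (2 ^ j')) k]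
  have hdet : (A.updateCol last
      (fun i => (X i : MvPolynomial (Fin k) (ZMod 2)) ^ (2 ^ k))).det = coeffs last • A.det := by
    rw [hcol]
    exact Matrix.det_updateCol_sum A last coeffs
  have hAdet : A.det = D k := by
    rw [hAmat, Matrix.det_permute']
    have hD : Dmat.det = D k := rfl
    rcases Int.units_eq_one_or (Equiv.Perm.sign σ) with h | h <;> rw [h]
    · simp [hD]
    · push_cast
      rw [neg_one_mul, hD, CharTwo.neg_eq]
  rw [hN, hdet, hAdet]
  show D k * G k (2 ^ k - 2 ^ j) = G k (2 ^ k - 2 ^ (fv ((last : Fin k) : ℕ))) • D k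
  have hlastv : fv ((last : Fin k) : ℕ) = j := by
    show fv (k - 1) = j
    simp only [hfv]
    rw [if_neg (by omega)]
  rw [hlastv, smul_eq_mul, mul_comm]
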